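/- The ratio of the optimal linear cost J_lin = inf_{P>=0}[k^2 P + ((σ0-√P)^+)^2/(((σ0-√P)^+)^2+1)] to the quantization cost bound k^2 a^2 diverges to infinity as k → 0 and σ0 → ∞. Specifically, for any P: if P < σ0^2/4 then the linear cost is at least σ0^2/(σ0^2+4), and if P >= σ0^2/4 then it is at least k^2 σ0^2/4; hence J_lin / (k^2 a^2) >= min{ σ0^2/((σ0^2+4) k^2 a^2), σ0^2/(4a^2) }. -/

import Mathlib

open Real

/-- Cost of a linear strategy of power `P` in the scalar stochastic Witsenhausen problem. -/
noncomputable def linCost (k σ0 P : ℝ) : ℝ :=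
  k ^ 2 * P + (max (σ0 - Real.sqrt P) 0) ^ 2 / ((max (σ0 - Real.sqrt P) 0) ^ 2 + 1)

/-- Optimal cost of linear strategies. -/
noncomputable def Jlin (k σ0 : ℝ) : ℝ := ⨅ P : {p : ℝ // 0 ≤ p}, linCost k σ0 P.1

lemma linCost_lb_small (k σ0 : ℝ) (hσ0 : 0 < σ0) :
    ∀ P : ℝ, 0 ≤ P → P < σ0 ^ 2 / 4 → linCost k σ0 P ≥ σ0 ^ 2 / (σ0 ^ 2 + 4) := by
  intro P hP hPlt
  have hs : Real.sqrt P < σ0 / 2 := by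
    have : Real.sqrt P < Real.sqrt (σ0 ^ 2 / 4) := Real.sqrt_lt_sqrt hP hPlt
    have h4 : Real.sqrt (σ0 ^ 2 / 4) = σ0 / 2 := by
      rw [show σ0 ^ 2 / 4 = (σ0 / 2) ^ 2 by ring]
      exact Real.sqrt_sq (by linarith)
    linarith [h4 ▸ this]
  set x := σ0 - Real.sqrt P with hx
  have hxpos : σ0 / 2 < x := by simp only [hx]; linarith
  have hmax : max x 0 = x := max_eq_left (by linarith)
  have hx2 : σ0 ^ 2 / 4 ≤ x ^ 2 := by nlinarith
  have hbound : σ0 ^ 2 / (σ0 ^ 2 + 4) ≤ x ^ 2 / (x ^ 2 + 1) := by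
    rw [div_le_div_iff₀ (by positivity) (by positivity)]
    nlinarith
  have hfirst : 0 ≤ k ^ 2 * P := by positivity
  unfold linCost
  rw [hmax]
  linarith

lemma linCost_lb_big (k σ0 : ℝ) :
    ∀ P : ℝ, σ0 ^ 2 / 4 ≤ P → linCost k σ0 P ≥ k ^ 2 * σ0 ^ 2 / 4 := by
  intro P hP
  have h2 : 0 ≤ (max (σ0 - Real.sqrt P) 0) ^ 2 / ((max (σ0 - Real.sqrt P) 0) ^ 2 + 1) := by
    positivity
  have : k ^ 2 * σ0 ^ 2 / 4 ≤ k ^ 2 * P := by nlinarith [sq_nonneg k]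
  unfold linCost; linarith

lemma Jlin_lb (k σ0 : ℝ) (hσ0 : 0 < σ0) :
    min (σ0 ^ 2 / (σ0 ^ 2 + 4)) (k ^ 2 * σ0 ^ 2 / 4) ≤ Jlin k σ0 := by
  have : Nonempty {p : ℝ // 0 ≤ p} := ⟨⟨0, le_refl 0⟩⟩
  refine le_ciInf fun P => ?_
  rcases lt_or_ge P.1 (σ0 ^ 2 / 4) with h | h
  · exact le_trans (min_le_left _ _) (linCost_lb_small k σ0 hσ0 P.1 P.2 h)
  · exact le_trans (min_le_right _ _) (linCost_lb_big k σ0 P.1 h)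

lemma ratio_lb (k σ0 a : ℝ) (hk : 0 < k) (hσ0 : 0 < σ0) (ha : 0 < a) :
    Jlin k σ0 / (k ^ 2 * a ^ 2) ≥
      min (σ0 ^ 2 / ((σ0 ^ 2 + 4) * k ^ 2 * a ^ 2)) (σ0 ^ 2 / (4 * a ^ 2)) := by
  have hden : 0 < k ^ 2 * a ^ 2 := by positivity
  have hJ := Jlin_lb k σ0 hσ0
  have h1 : σ0 ^ 2 / ((σ0 ^ 2 + 4) * k ^ 2 * a ^ 2)
      = (σ0 ^ 2 / (σ0 ^ 2 + 4)) / (k ^ 2 * a ^ 2) := by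
    field_simp
  have h2 : σ0 ^ 2 / (4 * a ^ 2) = (k ^ 2 * σ0 ^ 2 / 4) / (k ^ 2 * a ^ 2) := by
    field_simp
  rw [h1, h2, min_div_div_right hden.le]
  exact div_le_div_of_nonneg_right hJ hden.le

theorem linear_vs_quantization_ratio_diverges
    (k σ0 a : ℝ) (hk : 0 < k) (hσ0 : 0 < σ0) (ha : 0 < a) :
    (∀ P : ℝ, 0 ≤ P → P < σ0 ^ 2 / 4 → linCost k σ0 P ≥ σ0 ^ 2 / (σ0 ^ 2 + 4)) ∧
    (∀ P : ℝ, σ0 ^ 2 / 4 ≤ P → linCost k σ0 P ≥ k ^ 2 * σ0 ^ 2 / 4) ∧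
    Jlin k σ0 / (k ^ 2 * a ^ 2) ≥
      min (σ0 ^ 2 / ((σ0 ^ 2 + 4) * k ^ 2 * a ^ 2)) (σ0 ^ 2 / (4 * a ^ 2)) ∧
    (∀ M > (0 : ℝ), ∃ K S : ℝ, 0 < K ∧
      ∀ k' σ0' : ℝ, 0 < k' → k' < K → S < σ0' →
        Jlin k' σ0' / (k' ^ 2 * a ^ 2) > M) := by
  refine ⟨linCost_lb_small k σ0 hσ0, linCost_lb_big k σ0, ratio_lb k σ0 a hk hσ0 ha, ?_⟩
  intro M hM
  refine ⟨Real.sqrt (1 / (2 * M * a ^ 2)), max 2 (2 * a * Real.sqrt M), by positivity, ?_⟩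
  intro k' σ0' hk' hkK hS
  have hσ0' : 0 < σ0' := lt_trans (by positivity) (lt_of_le_of_lt (le_max_left _ _) hS)
  have hrat := ratio_lb k' σ0' a hk' hσ0' ha
  have hσ2 : (2:ℝ) < σ0' := lt_of_le_of_lt (le_max_left _ _) hS
  have hσm : 2 * a * Real.sqrt M < σ0' := lt_of_le_of_lt (le_max_right _ _) hS
  -- second term > M
  have hsqM : Real.sqrt M ^ 2 = M := Real.sq_sqrt hM.le
  have h2nd : M < σ0' ^ 2 / (4 * a ^ 2) := by
    rw [lt_div_iff₀ (by positivity)]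
    have hq : (2 * a * Real.sqrt M) * (2 * a * Real.sqrt M) < σ0' * σ0' :=
      mul_self_lt_mul_self (by positivity) hσm
    nlinarith [hq, hsqM]
  -- first term > M
  have hk2 : k' ^ 2 < 1 / (2 * M * a ^ 2) := by
    have := Real.sq_sqrt (show (0:ℝ) ≤ 1 / (2 * M * a ^ 2) by positivity)
    nlinarith [Real.sqrt_nonneg (1 / (2 * M * a ^ 2))]
  have h1st : M < σ0' ^ 2 / ((σ0' ^ 2 + 4) * k' ^ 2 * a ^ 2) := by
    rw [lt_div_iff₀ (by positivity)]
    have hk2' : 2 * M * a ^ 2 * k' ^ 2 < 1 := by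
      have h0 : (0:ℝ) < 2 * M * a ^ 2 := by positivity
      calc 2 * M * a ^ 2 * k' ^ 2 < 2 * M * a ^ 2 * (1 / (2 * M * a ^ 2)) := by
            exact mul_lt_mul_of_pos_left hk2 h0
        _ = 1 := by field_simp
    -- need M * ((σ0'^2+4) k'^2 a^2) < σ0'^2. Since σ0'^2 > 4, σ0'^2+4 < 2σ0'^2.
    have h4 : σ0' ^ 2 + 4 < 2 * σ0' ^ 2 := by nlinarith
    have ha1 : (M * k' ^ 2 * a ^ 2) * (σ0' ^ 2 + 4) < (M * k' ^ 2 * a ^ 2) * (2 * σ0' ^ 2) :=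
      mul_lt_mul_of_pos_left h4 (by positivity)
    have ha2 : σ0' ^ 2 * (2 * M * a ^ 2 * k' ^ 2) < σ0' ^ 2 * 1 :=
      mul_lt_mul_of_pos_left hk2' (by positivity)
    nlinarith [ha1, ha2]
  calc M < min (σ0' ^ 2 / ((σ0' ^ 2 + 4) * k' ^ 2 * a ^ 2)) (σ0' ^ 2 / (4 * a ^ 2)) :=
        lt_min h1st h2nd
    _ ≤ Jlin k' σ0' / (k' ^ 2 * a ^ 2) := hrat
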